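/- For every complex λ and real θ with |sinh(θ/2)| < 1, cosh(λ θ) = F(λ, −λ; 1/2; −sinh²(θ/2)). -/

import Mathlib

/-- The Gauss hypergeometric series `F(a,b;c;z)`. -/
noncomputable def hypF (a b c z : ℂ) : ℂ :=
  ∑' n : ℕ, ((ascPochhammer ℂ n).eval a * (ascPochhammer ℂ n).eval b)
      / ((ascPochhammer ℂ n).eval c * (n.factorial : ℂ)) * z ^ n

namespace CoshHypAux

noncomputable def E (lam : ℂ) (n : ℕ) : ℂ :=
  (∏ k ∈ Finset.range n, (lam ^ 2 - (k : ℂ) ^ 2)) * 4 ^ n / ((2 * n).factorial : ℂ)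

lemma factA (n : ℕ) :
    (((2 * n).factorial : ℕ) : ℂ)
      = (ascPochhammer ℂ n).eval (1 / 2) * (n.factorial : ℂ) * 4 ^ n := by
  induction n with
  | zero => simp
  | succ m ih =>
      have h2 : 2 * (m + 1) = (2 * m) + 1 + 1 := by ring
      rw [h2, Nat.factorial_succ, Nat.factorial_succ, ascPochhammer_succ_eval,
        Nat.factorial_succ]
      push_cast [ih]
      ring

lemma factB (lam : ℂ) (n : ℕ) :
    (ascPochhammer ℂ n).eval lam * (ascPochhammer ℂ n).eval (-lam) * (-1) ^ n
      = ∏ k ∈ Finset.range n, (lam ^ 2 - (k : ℂ) ^ 2) := by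
  induction n with
  | zero => simp
  | succ m ih =>
      rw [Finset.prod_range_succ, ← ih, ascPochhammer_succ_eval, ascPochhammer_succ_eval]
      ring

lemma factC (n : ℕ) : (ascPochhammer ℂ n).eval (1 / 2) ≠ 0 := by
  induction n with
  | zero => simp
  | succ m ih =>
      rw [ascPochhammer_succ_eval]
      refine mul_ne_zero ih ?_
      intro h
      have := congrArg Complex.re h
      simp at this
      nlinarith [this]

lemma hcE (lam : ℂ) (n : ℕ) :
    (ascPochhammer ℂ n).eval lam * (ascPochhammer ℂ n).eval (-lam)
        / ((ascPochhammer ℂ n).eval (1 / 2) * (n.factorial : ℂ)) * (-1) ^ n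
      = E lam n := by
  have hA := factA n
  have hB := factB lam n
  have hC := factC n
  have hfac : (n.factorial : ℂ) ≠ 0 := by exact_mod_cast Nat.factorial_ne_zero n
  have h4 : (4 : ℂ) ^ n ≠ 0 := by norm_num
  rw [E, ← hB, hA]
  field_simp

lemma fact_step (n : ℕ) : ((2 * (n + 1)).factorial : ℕ)
    = (2 * n).factorial * ((2 * n + 1) * (2 * n + 2)) := by
  have h : 2 * (n + 1) = (2 * n + 1) + 1 := by ring
  rw [h, Nat.factorial_succ, Nat.factorial_succ]
  ring

lemma fact_ne (n : ℕ) : (((2 * n).factorial : ℕ) : ℂ) ≠ 0 := by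
  exact_mod_cast Nat.factorial_ne_zero _

lemma E_zero (lam : ℂ) : E lam 0 = 1 := by simp [E]

lemma E_rec (lam : ℂ) (n : ℕ) :
    E lam (n + 1) * ((2 * (n : ℂ) + 1) * (2 * n + 2)) = 4 * (lam ^ 2 - n ^ 2) * E lam n := by
  have h := fact_step n
  have h1 := fact_ne n
  have h2 := fact_ne (n + 1)
  have hC : (((2 * (n+1)).factorial : ℕ) : ℂ)
      = (((2 * n).factorial : ℕ) : ℂ) * ((2 * (n:ℂ) + 1) * (2 * n + 2)) := by
    push_cast [h]; ring
  have hd : (2 * (n:ℂ) + 1) * (2 * (n:ℂ) + 2) ≠ 0 := by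
    have h1' : (2 * (n:ℂ) + 1) ≠ 0 := by
      exact_mod_cast (Nat.cast_ne_zero (R := ℂ)).2 (by omega : 2 * n + 1 ≠ 0)
    have h2' : (2 * (n:ℂ) + 2) ≠ 0 := by
      exact_mod_cast (Nat.cast_ne_zero (R := ℂ)).2 (by omega : 2 * n + 2 ≠ 0)
    exact mul_ne_zero h1' h2'
  rw [E, E, Finset.prod_range_succ, hC]
  rw [← div_div, div_mul_cancel₀ _ hd]
  ring

noncomputable def B (x : ℝ) (n : ℕ) : ℝ :=
  (∏ k ∈ Finset.range n, (x + (k : ℝ) ^ 2)) * 4 ^ n / ((2 * n).factorial : ℝ)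

lemma B_nonneg {x : ℝ} (hx : 0 ≤ x) (n : ℕ) : 0 ≤ B x n := by
  have hp : 0 ≤ ∏ k ∈ Finset.range n, (x + (k : ℝ) ^ 2) :=
    Finset.prod_nonneg fun k _ => by positivity
  have h : (0:ℝ) < ((2*n).factorial : ℝ) := by exact_mod_cast (2*n).factorial_pos
  exact div_nonneg (mul_nonneg hp (by positivity)) h.le

lemma normE_le (lam : ℂ) (n : ℕ) : ‖E lam n‖ ≤ B (‖lam‖ ^ 2) n := by
  rw [E, B]
  rw [norm_div, norm_mul, norm_prod, norm_pow]
  have h4 : ‖(4:ℂ)‖ = 4 := by norm_num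
  have hf : ‖(((2*n).factorial : ℕ) : ℂ)‖ = ((2*n).factorial : ℝ) := by
    rw [Complex.norm_natCast]
  rw [h4, hf]
  have hfp : (0:ℝ) < ((2*n).factorial : ℝ) := by exact_mod_cast (2*n).factorial_pos
  rw [div_le_div_iff_of_pos_right hfp]
  apply mul_le_mul_of_nonneg_right ?_ (by positivity : (0:ℝ) ≤ 4 ^ n)
  apply Finset.prod_le_prod (fun k _ => norm_nonneg _)
  intro k _
  calc ‖lam ^ 2 - (k:ℂ) ^ 2‖ ≤ ‖lam ^ 2‖ + ‖(k:ℂ) ^ 2‖ := norm_sub_le _ _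
    _ = ‖lam‖ ^ 2 + (k:ℝ) ^ 2 := by
        rw [norm_pow, norm_pow, Complex.norm_natCast]

lemma B_succ_le {x : ℝ} (hx : 0 ≤ x) {n : ℕ} (hn : x ≤ n) : B x (n + 1) ≤ B x n := by
  have h1 : (0:ℝ) < ((2*n).factorial : ℝ) := by exact_mod_cast (2*n).factorial_pos
  have key : B x (n+1) = B x n * (4 * (x + (n:ℝ)^2)) / ((2*n+1)*(2*n+2)) := by
    rw [B, B, Finset.prod_range_succ]
    rw [fact_step n]
    push_cast
    field_simp
    ring
  rw [key]
  have hd : (0:ℝ) < (2*(n:ℝ)+1)*(2*n+2) := by positivity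
  rw [div_le_iff₀ hd]
  have hBn := B_nonneg hx n
  have hle : 4 * (x + (n:ℝ)^2) ≤ (2*n+1)*(2*n+2) := by nlinarith
  nlinarith [mul_le_mul_of_nonneg_left hle hBn]

lemma B_le_C0 {x : ℝ} (hx : 0 ≤ x) :
    ∀ n, B x n ≤ ∑ k ∈ Finset.range (⌈x⌉₊ + 1), B x k := by
  set N0 := ⌈x⌉₊ with hN0
  have hmono : ∀ k, B x (N0 + k) ≤ B x N0 := by
    intro k
    induction k with
    | zero => simp
    | succ m ih =>
        have : x ≤ (N0 + m : ℕ) := by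
          calc x ≤ (N0 : ℝ) := Nat.le_ceil x
            _ ≤ ((N0 + m : ℕ) : ℝ) := by push_cast; linarith [Nat.cast_nonneg (α := ℝ) m]
        calc B x (N0 + (m+1)) = B x ((N0 + m) + 1) := by ring_nf
          _ ≤ B x (N0 + m) := B_succ_le hx this
          _ ≤ B x N0 := ih
  intro n
  rcases le_or_gt n N0 with h | h
  · exact Finset.single_le_sum (fun k _ => B_nonneg hx k)
      (Finset.mem_range.2 (by omega))
  · calc B x n = B x (N0 + (n - N0)) := by congr 1; omega
      _ ≤ B x N0 := hmono _
      _ ≤ _ := Finset.single_le_sum (fun k _ => B_nonneg hx k)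
            (Finset.mem_range.2 (by omega))

noncomputable def ff (lam : ℂ) (n : ℕ) (t : ℝ) : ℂ :=
  E lam n * Complex.sinh ((t : ℂ) / 2) ^ (2 * n)

noncomputable def ff1 (lam : ℂ) (n : ℕ) (t : ℝ) : ℂ :=
  E lam n * (n : ℂ) * Complex.sinh ((t : ℂ) / 2) ^ (2 * n - 1) * Complex.cosh ((t : ℂ) / 2)

noncomputable def ff2 (lam : ℂ) (n : ℕ) (t : ℝ) : ℂ :=
  E lam n * (n : ℂ) *
    (((2 * n - 1 : ℕ) : ℂ) * Complex.sinh ((t : ℂ) / 2) ^ (2 * n - 2)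
        * Complex.cosh ((t : ℂ) / 2) ^ 2
      + Complex.sinh ((t : ℂ) / 2) ^ (2 * n)) / 2

lemma hsder (z : ℂ) :
    HasDerivAt (fun z : ℂ => Complex.sinh (z / 2)) (Complex.cosh (z / 2) / 2) z := by
  have := (Complex.hasDerivAt_sinh (z / 2)).comp z ((hasDerivAt_id z).div_const 2)
  simpa [Function.comp_def, div_eq_mul_inv] using this

lemma hcder (z : ℂ) :
    HasDerivAt (fun z : ℂ => Complex.cosh (z / 2)) (Complex.sinh (z / 2) / 2) z := by
  have := (Complex.hasDerivAt_cosh (z / 2)).comp z ((hasDerivAt_id z).div_const 2)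
  simpa [Function.comp_def, div_eq_mul_inv] using this

lemma ffD1 (lam : ℂ) (n : ℕ) (t : ℝ) : HasDerivAt (ff lam n) (ff1 lam n t) t := by
  have h : HasDerivAt (fun z : ℂ => E lam n * Complex.sinh (z / 2) ^ (2 * n))
      (E lam n * ((2 * n : ℕ) * Complex.sinh ((t : ℂ) / 2) ^ (2 * n - 1)
        * (Complex.cosh ((t : ℂ) / 2) / 2))) (t : ℂ) :=
    ((hsder (t : ℂ)).pow (2 * n)).const_mul (E lam n)
  have h2 := h.comp_ofReal
  have hval : (E lam n * ((2 * n : ℕ) * Complex.sinh ((t : ℂ) / 2) ^ (2 * n - 1)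
        * (Complex.cosh ((t : ℂ) / 2) / 2))) = ff1 lam n t := by
    rw [ff1]; push_cast; ring
  exact hval ▸ h2

lemma ffD2 (lam : ℂ) (n : ℕ) (t : ℝ) : HasDerivAt (ff1 lam n) (ff2 lam n t) t := by
  have h : HasDerivAt
      (fun z : ℂ => E lam n * (n : ℂ) * Complex.sinh (z / 2) ^ (2 * n - 1)
        * Complex.cosh (z / 2))
      ((E lam n * (n : ℂ) * (((2 * n - 1 : ℕ) : ℂ)
          * Complex.sinh ((t : ℂ) / 2) ^ (2 * n - 1 - 1)
          * (Complex.cosh ((t : ℂ) / 2) / 2))) * Complex.cosh ((t : ℂ) / 2)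
        + (E lam n * (n : ℂ) * Complex.sinh ((t : ℂ) / 2) ^ (2 * n - 1))
          * (Complex.sinh ((t : ℂ) / 2) / 2)) (t : ℂ) :=
    (((hsder (t : ℂ)).pow (2 * n - 1)).const_mul (E lam n * (n : ℂ))).mul (hcder (t : ℂ))
  have h2 := h.comp_ofReal
  have hval : ((E lam n * (n : ℂ) * (((2 * n - 1 : ℕ) : ℂ)
          * Complex.sinh ((t : ℂ) / 2) ^ (2 * n - 1 - 1)
          * (Complex.cosh ((t : ℂ) / 2) / 2))) * Complex.cosh ((t : ℂ) / 2)
        + (E lam n * (n : ℂ) * Complex.sinh ((t : ℂ) / 2) ^ (2 * n - 1))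
          * (Complex.sinh ((t : ℂ) / 2) / 2)) = ff2 lam n t := by
    rw [ff2]
    rcases n with _ | m
    · simp
    · have e1 : 2 * (m + 1) - 1 = 2 * m + 1 := by omega
      have e2 : 2 * (m + 1) - 2 = 2 * m := by omega
      have e3 : 2 * m + 1 - 1 = 2 * m := by omega
      have e4 : 2 * (m + 1) = 2 * m + 2 := by omega
      rw [e1, e2, e3, e4]
      push_cast
      ring
  exact hval ▸ h2

lemma ff2_eq (lam : ℂ) (n : ℕ) (t : ℝ) :
    ff2 lam n t
      = E lam n * ((n : ℂ) * (2 * (n : ℂ) - 1) / 2) * Complex.sinh ((t : ℂ) / 2) ^ (2 * n - 2)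
        + E lam n * (n : ℂ) ^ 2 * Complex.sinh ((t : ℂ) / 2) ^ (2 * n) := by
  rw [ff2, Complex.cosh_sq]
  rcases n with _ | m
  · simp
  · have e2 : 2 * (m + 1) - 2 = 2 * m := by omega
    have e1 : 2 * (m + 1) - 1 = 2 * m + 1 := by omega
    have e4 : 2 * (m + 1) = 2 * m + 2 := by omega
    rw [e1, e2, e4]
    push_cast
    ring

lemma a_succ (lam : ℂ) (s : ℂ) (n : ℕ) :
    E lam (n + 1) * (((n + 1 : ℕ) : ℂ) * (2 * ((n + 1 : ℕ) : ℂ) - 1) / 2) * s ^ (2 * (n + 1) - 2)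
      = (lam ^ 2 - (n : ℂ) ^ 2) * (E lam n * s ^ (2 * n)) := by
  have he : 2 * (n + 1) - 2 = 2 * n := by omega
  rw [he]
  have hrec := E_rec lam n
  push_cast
  linear_combination (s ^ (2 * n) / 4) * hrec

lemma pow_sub_le1 {r : ℝ} (hr : 1 / 2 ≤ r) (m : ℕ) : r ^ (m - 1) ≤ 2 * r ^ m := by
  have hrp : (0:ℝ) < r := by linarith
  rcases m with _ | k
  · norm_num
  · simp only [Nat.add_sub_cancel, pow_succ]
    nlinarith [pow_nonneg hrp.le k, pow_pos hrp k]

lemma pow_sub_le2 {r : ℝ} (hr : 1 / 2 ≤ r) (m : ℕ) : r ^ (m - 2) ≤ 4 * r ^ m := by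
  have hrp : (0:ℝ) < r := by linarith
  rcases m with _ | k
  · norm_num
  rcases k with _ | j
  · norm_num; nlinarith
  · have e : (j + 1 + 1) - 2 = j := by omega
    rw [e, pow_succ, pow_succ]
    have h1 : (0:ℝ) ≤ 4*r^2 - 1 := by nlinarith
    nlinarith [mul_nonneg (pow_nonneg hrp.le j) h1]

lemma mul_le_mul3 {a b c a' b' c' : ℝ} (h1 : a ≤ a') (h2 : b ≤ b') (h3 : c ≤ c')
    (b0 : 0 ≤ b) (c0 : 0 ≤ c) (a'0 : 0 ≤ a') (b'0 : 0 ≤ b') : a*b*c ≤ a'*b'*c' :=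
  mul_le_mul (mul_le_mul h1 h2 b0 a'0) h3 c0 (mul_nonneg a'0 b'0)

lemma mul_le_mul4 {a b c d a' b' c' d' : ℝ} (h1 : a ≤ a') (h2 : b ≤ b') (h3 : c ≤ c')
    (h4 : d ≤ d') (b0 : 0 ≤ b) (c0 : 0 ≤ c) (d0 : 0 ≤ d) (a'0 : 0 ≤ a') (b'0 : 0 ≤ b')
    (c'0 : 0 ≤ c') : a*b*c*d ≤ a'*b'*c'*d' :=
  mul_le_mul (mul_le_mul3 h1 h2 h3 b0 c0 a'0 b'0) h4 d0
    (mul_nonneg (mul_nonneg a'0 b'0) c'0)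

lemma norm_ff_bounds {lam : ℂ} {C0 r : ℝ} (hE : ∀ n, ‖E lam n‖ ≤ C0) (hC00 : 0 ≤ C0)
    (hr : 1 / 2 ≤ r) {t : ℝ}
    (hs : ‖Complex.sinh ((t : ℂ) / 2)‖ ≤ r) (hc : ‖Complex.cosh ((t : ℂ) / 2)‖ ≤ 2)
    (n : ℕ) :
    ‖ff lam n t‖ ≤ 20 * C0 * ((n : ℝ) + 1) ^ 2 * r ^ (2 * n)
    ∧ ‖ff1 lam n t‖ ≤ 20 * C0 * ((n : ℝ) + 1) ^ 2 * r ^ (2 * n)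
    ∧ ‖ff2 lam n t‖ ≤ 20 * C0 * ((n : ℝ) + 1) ^ 2 * r ^ (2 * n) := by
  have hrp : (0:ℝ) < r := by linarith
  set s := Complex.sinh ((t : ℂ) / 2) with hsdef
  set c := Complex.cosh ((t : ℂ) / 2) with hcdef
  set q := r ^ (2 * n) with hqdef
  have hq0 : 0 ≤ q := pow_nonneg hrp.le _
  have hnn : (0:ℝ) ≤ (n : ℝ) := Nat.cast_nonneg n
  have hS0 : (0:ℝ) ≤ ‖s‖ := norm_nonneg _
  have hpow : ∀ m, ‖s‖ ^ m ≤ r ^ m := fun m => pow_le_pow_left₀ hS0 hs m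
  have hqn : ‖s‖ ^ (2*n) ≤ q := hpow (2*n)
  have hq1 : ‖s‖ ^ (2*n-1) ≤ 2*q := (hpow (2*n-1)).trans (pow_sub_le1 hr (2*n))
  have hq2 : ‖s‖ ^ (2*n-2) ≤ 4*q := (hpow (2*n-2)).trans (pow_sub_le2 hr (2*n))
  have hEn := hE n
  have hE0 : (0:ℝ) ≤ ‖E lam n‖ := norm_nonneg _
  have hCqn : 0 ≤ C0 * q * (n:ℝ) := by positivity
  have hCqn2 : 0 ≤ C0 * q * (n:ℝ)^2 := by positivity
  have hCq : 0 ≤ C0 * q := by positivity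
  refine ⟨?_, ?_, ?_⟩
  · rw [ff, norm_mul, norm_pow]
    have := mul_le_mul hEn hqn (pow_nonneg hS0 _) hC00
    nlinarith
  · rw [ff1, norm_mul, norm_mul, norm_mul, norm_pow, Complex.norm_natCast]
    have key : ‖E lam n‖ * (n:ℝ) * ‖s‖^(2*n-1) * ‖c‖ ≤ C0 * (n:ℝ) * (2*q) * 2 :=
      mul_le_mul4 hEn le_rfl hq1 hc hnn (pow_nonneg hS0 _) (norm_nonneg _) hC00 hnn
        (by linarith)
    nlinarith
  · rw [ff2, norm_div, norm_mul, norm_mul, Complex.norm_natCast]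
    have h2 : ‖(2:ℂ)‖ = 2 := by norm_num
    rw [h2]
    have hcsq : ‖c‖^2 ≤ 4 := by nlinarith [norm_nonneg c]
    have hcoef : ((2*n-1 : ℕ) : ℝ) ≤ 2*(n:ℝ) := by
      have h := Nat.sub_le (2*n) 1
      have : ((2*n-1 : ℕ) : ℝ) ≤ ((2*n : ℕ) : ℝ) := by exact_mod_cast h
      push_cast at this; linarith
    have hinner : ‖((2*n-1:ℕ):ℂ) * s^(2*n-2) * c^2 + s^(2*n)‖ ≤ 32*(n:ℝ)*q + q := by
      calc ‖((2*n-1:ℕ):ℂ) * s^(2*n-2) * c^2 + s^(2*n)‖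
          ≤ ‖((2*n-1:ℕ):ℂ) * s^(2*n-2) * c^2‖ + ‖s^(2*n)‖ := norm_add_le _ _
        _ = ((2*n-1:ℕ):ℝ) * ‖s‖^(2*n-2) * ‖c‖^2 + ‖s‖^(2*n) := by
            rw [norm_mul, norm_mul, norm_pow, norm_pow, norm_pow, Complex.norm_natCast]
        _ ≤ 2*(n:ℝ) * (4*q) * 4 + q := by
            refine add_le_add (mul_le_mul3 hcoef hq2 hcsq (pow_nonneg hS0 _)
              (sq_nonneg _) (by linarith) (by linarith)) hqn
        _ = 32*(n:ℝ)*q + q := by ring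
    have key : ‖E lam n‖ * (n:ℝ) * ‖((2*n-1:ℕ):ℂ) * s^(2*n-2) * c^2 + s^(2*n)‖
        ≤ C0 * (n:ℝ) * (32*(n:ℝ)*q + q) :=
      mul_le_mul3 hEn le_rfl hinner hnn (norm_nonneg _) hC00 hnn
    nlinarith

lemma summable_u (C0 : ℝ) {r : ℝ} (hrp : 0 < r) (hr1 : r < 1) :
    Summable (fun n : ℕ => 20 * C0 * ((n:ℝ)+1)^2 * r^(2*n)) := by
  have hq : ‖r^2‖ < 1 := by
    rw [Real.norm_eq_abs, abs_of_nonneg (sq_nonneg r)]; nlinarith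
  have s2 := summable_pow_mul_geometric_of_norm_lt_one (R := ℝ) 2 hq
  have s1 := summable_pow_mul_geometric_of_norm_lt_one (R := ℝ) 1 hq
  have s0 := summable_pow_mul_geometric_of_norm_lt_one (R := ℝ) 0 hq
  have hsum := ((s2.add (s1.mul_left 2)).add s0).mul_left (20*C0)
  apply hsum.congr
  intro n
  rw [pow_mul]
  push_cast
  ring

end CoshHypAux
open CoshHypAux in
theorem cosh_eq_hypF (lam : ℂ) (θ : ℝ) (hθ : |Real.sinh (θ / 2)| < 1) :
    Complex.cosh (lam * θ)
      = hypF lam (-lam) (1 / 2) ((-(Real.sinh (θ / 2) ^ 2) : ℝ) : ℂ) := by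
  classical
  set x : ℝ := ‖lam‖^2 with hxdef
  have hx0 : 0 ≤ x := sq_nonneg _
  set r : ℝ := (|Real.sinh (θ/2)| + 1)/2 with hrdef
  have habs : 0 ≤ |Real.sinh (θ/2)| := abs_nonneg _
  have hr2 : 1/2 ≤ r := by rw [hrdef]; linarith
  have hrp : 0 < r := by linarith
  have hr1 : r < 1 := by rw [hrdef]; linarith
  have hsr : |Real.sinh (θ/2)| < r := by rw [hrdef]; linarith
  set T : ℝ := 2 * Real.arsinh r with hTdef
  set S : Set ℝ := Set.Ioo (-T) T with hSdef
  have hSopen : IsOpen S := isOpen_Ioo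
  have hSconn : IsPreconnected S := isPreconnected_Ioo
  have hmem : ∀ t : ℝ, |Real.sinh (t/2)| < r → t ∈ S := by
    intro t h
    have h1 : t/2 < Real.arsinh r := by
      apply Real.sinh_lt_sinh.mp
      rw [Real.sinh_arsinh]; exact (abs_lt.1 h).2
    have h2 : -(Real.arsinh r) < t/2 := by
      apply Real.sinh_lt_sinh.mp
      rw [Real.sinh_neg, Real.sinh_arsinh]; exact (abs_lt.1 h).1
    exact ⟨by rw [hTdef]; linarith, by rw [hTdef]; linarith⟩
  have hmem' : ∀ t ∈ S, |Real.sinh (t/2)| ≤ r := by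
    intro t ht
    obtain ⟨h1, h2⟩ := ht
    rw [hTdef] at h1 h2
    have ha : Real.sinh (t/2) < r := by
      have h := Real.sinh_lt_sinh.2 (show t/2 < Real.arsinh r by linarith)
      rwa [Real.sinh_arsinh] at h
    have hb : -r < Real.sinh (t/2) := by
      have h := Real.sinh_lt_sinh.2 (show -(Real.arsinh r) < t/2 by linarith)
      rwa [Real.sinh_neg, Real.sinh_arsinh] at h
    rw [abs_le]; exact ⟨hb.le, ha.le⟩
  have hθS : θ ∈ S := hmem θ hsr
  have h0S : (0:ℝ) ∈ S := by
    apply hmem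
    norm_num [Real.sinh_zero]
    linarith
  set C0 : ℝ := ∑ k ∈ Finset.range (⌈x⌉₊ + 1), B x k with hC0def
  have hBC0 : ∀ n, B x n ≤ C0 := B_le_C0 hx0
  have hC00 : 0 ≤ C0 := le_trans (B_nonneg hx0 0) (hBC0 0)
  have hEC0 : ∀ n, ‖E lam n‖ ≤ C0 := fun n => (normE_le lam n).trans (hBC0 n)
  set u : ℕ → ℝ := fun n => 20 * C0 * ((n:ℝ)+1)^2 * r^(2*n) with hudef
  have hu : Summable u := summable_u C0 hrp hr1
  have hnorm : ∀ t ∈ S, ‖Complex.sinh ((t:ℂ)/2)‖ ≤ r ∧ ‖Complex.cosh ((t:ℂ)/2)‖ ≤ 2 := by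
    intro t ht
    have h1 : ((t:ℂ)/2) = ((t/2 : ℝ) : ℂ) := by push_cast; ring
    have hsb := hmem' t ht
    constructor
    · rw [h1, ← Complex.ofReal_sinh, Complex.norm_real, Real.norm_eq_abs]; exact hsb
    · rw [h1, ← Complex.ofReal_cosh, Complex.norm_real, Real.norm_eq_abs]
      have hco : 0 < Real.cosh (t/2) := Real.cosh_pos (t/2)
      rw [abs_of_pos hco]
      have hrr : r * r < 1 := by nlinarith
      nlinarith [Real.cosh_sq (t/2), sq_abs (Real.sinh (t/2)),
        mul_le_mul hsb hsb (abs_nonneg _) hrp.le]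
  have hbnd : ∀ t ∈ S, ∀ n, ‖ff lam n t‖ ≤ u n ∧ ‖ff1 lam n t‖ ≤ u n ∧ ‖ff2 lam n t‖ ≤ u n :=
    fun t ht n => norm_ff_bounds hEC0 hC00 hr2 (hnorm t ht).1 (hnorm t ht).2 n
  have hsum_f : ∀ t ∈ S, Summable (fun n => ff lam n t) :=
    fun t ht => Summable.of_norm_bounded hu (fun n => (hbnd t ht n).1)
  have hsum_f1 : ∀ t ∈ S, Summable (fun n => ff1 lam n t) :=
    fun t ht => Summable.of_norm_bounded hu (fun n => (hbnd t ht n).2.1)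
  have hsum_f2 : ∀ t ∈ S, Summable (fun n => ff2 lam n t) :=
    fun t ht => Summable.of_norm_bounded hu (fun n => (hbnd t ht n).2.2)
  set H : ℝ → ℂ := fun t => ∑' n, ff lam n t with hHdef
  set H1 : ℝ → ℂ := fun t => ∑' n, ff1 lam n t with hH1def
  have hHd : ∀ t ∈ S, HasDerivAt H (H1 t) t := fun t ht =>
    hasDerivAt_tsum_of_isPreconnected hu hSopen hSconn (fun n y _ => ffD1 lam n y)
      (fun n y hy => (hbnd y hy n).2.1) h0S (hsum_f 0 h0S) ht
  have hH1d : ∀ t ∈ S, HasDerivAt H1 (∑' n, ff2 lam n t) t := fun t ht =>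
    hasDerivAt_tsum_of_isPreconnected hu hSopen hSconn (fun n y _ => ffD2 lam n y)
      (fun n y hy => (hbnd y hy n).2.2) h0S (hsum_f1 0 h0S) ht
  have hkey : ∀ t ∈ S, (∑' n, ff2 lam n t) = lam^2 * H t := by
    intro t ht
    set s : ℂ := Complex.sinh ((t:ℂ)/2) with hs
    set a : ℕ → ℂ := fun n => E lam n * ((n:ℂ) * (2*(n:ℂ)-1)/2) * s^(2*n-2) with hadef
    set b : ℕ → ℂ := fun n => E lam n * (n:ℂ)^2 * s^(2*n) with hbdef
    have hsplit : ∀ n, ff2 lam n t = a n + b n := fun n => ff2_eq lam n t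
    have hb_sum : Summable b := by
      apply Summable.of_norm_bounded hu
      intro n
      rw [hbdef]
      simp only
      rw [norm_mul, norm_mul, norm_pow, norm_pow, Complex.norm_natCast]
      have hsn : ‖s‖ ≤ r := (hnorm t ht).1
      have hS0 : (0:ℝ) ≤ ‖s‖ := norm_nonneg _
      have hqn : ‖s‖^(2*n) ≤ r^(2*n) := pow_le_pow_left₀ hS0 hsn _
      have key : ‖E lam n‖ * (n:ℝ)^2 * ‖s‖^(2*n) ≤ C0 * (n:ℝ)^2 * r^(2*n) :=
        mul_le_mul3 (hEC0 n) le_rfl hqn (sq_nonneg _) (pow_nonneg hS0 _) hC00 (sq_nonneg _)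
      have hq0 : (0:ℝ) ≤ r^(2*n) := pow_nonneg hrp.le _
      have hnn : (0:ℝ) ≤ (n:ℝ) := Nat.cast_nonneg n
      rw [hudef]
      simp only
      nlinarith [mul_nonneg (mul_nonneg hC00 hq0) hnn,
        mul_nonneg (mul_nonneg hC00 hq0) (mul_nonneg hnn hnn)]
    have ha_sum : Summable a :=
      ((hsum_f2 t ht).sub hb_sum).congr (fun n => by rw [hsplit n]; ring)
    have hshift : ∀ n : ℕ, a (n+1) = (lam^2 - (n:ℂ)^2) * ff lam n t := by
      intro n
      rw [hadef]
      simp only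
      rw [ff]
      have := a_succ lam s n
      push_cast at this ⊢
      exact this
    have ha' : Summable (fun n : ℕ => (lam^2 - (n:ℂ)^2) * ff lam n t) :=
      (((summable_nat_add_iff 1).2 ha_sum).congr (fun n => hshift n))
    have ha0 : a 0 = 0 := by rw [hadef]; simp
    calc ∑' n, ff2 lam n t = ∑' n, (a n + b n) := tsum_congr hsplit
      _ = (∑' n, a n) + ∑' n, b n := ha_sum.tsum_add hb_sum
      _ = (∑' n, a (n+1)) + ∑' n, b n := by
          rw [ha_sum.tsum_eq_zero_add, ha0, zero_add]
      _ = (∑' n : ℕ, (lam^2 - (n:ℂ)^2) * ff lam n t) + ∑' n, b n := by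
          rw [tsum_congr hshift]
      _ = ∑' n : ℕ, ((lam^2 - (n:ℂ)^2) * ff lam n t + b n) := (ha'.tsum_add hb_sum).symm
      _ = ∑' n : ℕ, lam^2 * ff lam n t := by
          apply tsum_congr
          intro n
          simp only [hbdef, ff]
          rw [← hs]
          ring
      _ = lam^2 * H t := tsum_mul_left
  have hsinh0 : Complex.sinh (((0:ℝ):ℂ)/2) = 0 := by norm_num
  have hH0 : H 0 = 1 := by
    rw [hHdef]
    simp only
    rw [tsum_eq_single 0 ?_]
    · rw [ff, E_zero]; simp
    · intro n hn
      rw [ff, hsinh0, zero_pow (by omega : 2*n ≠ 0), mul_zero]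
  have hH10 : H1 0 = 0 := by
    rw [hH1def]
    simp only
    have hz : ∀ n, ff1 lam n 0 = 0 := by
      intro n
      rcases n with _ | m
      · rw [ff1]; simp
      · rw [ff1, hsinh0, zero_pow (by omega : 2*(m+1)-1 ≠ 0)]; ring
    rw [tsum_congr hz, tsum_zero]
  set G : ℝ → ℂ := fun t => Complex.cosh (lam * t) with hGdef
  set G1 : ℝ → ℂ := fun t => lam * Complex.sinh (lam * t) with hG1def
  have hGd : ∀ t : ℝ, HasDerivAt G (G1 t) t := by
    intro t
    have h := ((Complex.hasDerivAt_cosh (lam * (t:ℂ))).comp (t:ℂ)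
      ((hasDerivAt_id (t:ℂ)).const_mul lam)).comp_ofReal
    have hval : Complex.sinh (lam * (t:ℂ)) * (lam * 1) = G1 t := by rw [hG1def]; ring
    exact hval ▸ h
  have hG1d : ∀ t : ℝ, HasDerivAt G1 (lam^2 * G t) t := by
    intro t
    have h := (((Complex.hasDerivAt_sinh (lam * (t:ℂ))).comp (t:ℂ)
      ((hasDerivAt_id (t:ℂ)).const_mul lam)).const_mul lam).comp_ofReal
    have hval : lam * (Complex.cosh (lam * (t:ℂ)) * (lam * 1)) = lam^2 * G t := by
      rw [hGdef]; ring
    exact hval ▸ h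
  set P : ℝ → ℂ := fun t => H1 t - G1 t - lam * (H t - G t) with hPdef
  have hPd : ∀ t ∈ S, HasDerivAt P (-lam * P t) t := by
    intro t ht
    have h2 : HasDerivAt H1 (lam^2 * H t) t := hkey t ht ▸ hH1d t ht
    have hd := (h2.sub (hG1d t)).sub (((hHd t ht).sub (hGd t)).const_mul lam)
    have hval : lam^2 * H t - lam^2 * G t - lam * (H1 t - G1 t) = -lam * P t := by
      rw [hPdef]; ring
    exact hval ▸ hd
  have hexp : ∀ (c : ℂ) (t : ℝ), HasDerivAt (fun t : ℝ => Complex.exp (c * t))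
      (c * Complex.exp (c * t)) t := by
    intro c t
    have h := ((Complex.hasDerivAt_exp (c * (t:ℂ))).comp (t:ℂ)
      ((hasDerivAt_id (t:ℂ)).const_mul c)).comp_ofReal
    have hval : Complex.exp (c * (t:ℂ)) * (c * 1) = c * Complex.exp (c * (t:ℝ)) := by ring
    exact hval ▸ h
  have hQd : ∀ t ∈ S, HasDerivAt (fun t : ℝ => Complex.exp (lam * t) * P t) 0 t := by
    intro t ht
    have hd := (hexp lam t).mul (hPd t ht)
    have hval : lam * Complex.exp (lam * t) * P t + Complex.exp (lam * t) * (-lam * P t)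
        = 0 := by ring
    exact hval ▸ hd
  set A : ℝ := min θ 0 with hAdef
  set Bb : ℝ := max θ 0 with hBdef
  have hIcc : Set.Icc A Bb ⊆ S := by
    intro y hy
    constructor
    · exact lt_of_lt_of_le (lt_min hθS.1 h0S.1) hy.1
    · exact lt_of_le_of_lt hy.2 (max_lt hθS.2 h0S.2)
  have h0mem : (0:ℝ) ∈ Set.Icc A Bb := ⟨min_le_right _ _, le_max_right _ _⟩
  have hθmem : θ ∈ Set.Icc A Bb := ⟨min_le_left _ _, le_max_left _ _⟩
  have huniq : ∀ y ∈ Set.Ico A Bb, UniqueDiffWithinAt ℝ (Set.Icc A Bb) y := fun y hy =>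
    (uniqueDiffOn_Icc (lt_of_le_of_lt hy.1 hy.2)) y (Set.Ico_subset_Icc_self hy)
  have hQconst : ∀ y ∈ Set.Icc A Bb,
      Complex.exp (lam * y) * P y = Complex.exp (lam * A) * P A := by
    apply constant_of_derivWithin_zero
    · intro y hy
      exact ((hQd y (hIcc hy)).differentiableAt).differentiableWithinAt
    · intro y hy
      exact ((hQd y (hIcc (Set.Ico_subset_Icc_self hy))).hasDerivWithinAt).derivWithin
        (huniq y hy)
  have hP0 : P 0 = 0 := by
    rw [hPdef]
    simp only
    rw [hH10, hH0, hG1def, hGdef]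
    simp
  have hPzero : ∀ y ∈ Set.Icc A Bb, P y = 0 := by
    intro y hy
    have h1 := hQconst y hy
    have h2 := hQconst 0 h0mem
    have h3 : Complex.exp (lam * (0:ℝ)) * P 0 = 0 := by rw [hP0, mul_zero]
    have h4 : Complex.exp (lam * y) * P y = 0 := by rw [h1, ← h2]; exact h3
    exact (mul_eq_zero.1 h4).resolve_left (Complex.exp_ne_zero _)
  have hRd : ∀ y ∈ Set.Icc A Bb,
      HasDerivAt (fun t : ℝ => Complex.exp ((-lam) * t) * (H t - G t)) 0 y := by
    intro y hy
    have hd := (hexp (-lam) y).mul ((hHd y (hIcc hy)).sub (hGd y))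
    have hPy := hPzero y hy
    rw [hPdef] at hPy
    simp only at hPy
    have hval : -lam * Complex.exp ((-lam) * y) * (H y - G y)
        + Complex.exp ((-lam) * y) * (H1 y - G1 y) = 0 := by
      linear_combination Complex.exp ((-lam) * (y:ℝ)) * hPy
    exact hval ▸ hd
  have hRconst : ∀ y ∈ Set.Icc A Bb,
      Complex.exp ((-lam) * y) * (H y - G y) = Complex.exp ((-lam) * A) * (H A - G A) := by
    apply constant_of_derivWithin_zero
    · intro y hy
      exact ((hRd y hy).differentiableAt).differentiableWithinAt
    · intro y hy
      exact ((hRd y (Set.Ico_subset_Icc_self hy)).hasDerivWithinAt).derivWithin (huniq y hy)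
  have hR0 : Complex.exp ((-lam) * (0:ℝ)) * (H 0 - G 0) = 0 := by
    rw [hH0, hGdef]
    simp
  have hRθ : Complex.exp ((-lam) * θ) * (H θ - G θ) = 0 := by
    rw [hRconst θ hθmem, ← hRconst 0 h0mem]; exact hR0
  have hHG : H θ = G θ := by
    have h := (mul_eq_zero.1 hRθ).resolve_left (Complex.exp_ne_zero _)
    exact sub_eq_zero.1 h
  have hfinal : hypF lam (-lam) (1/2) ((-(Real.sinh (θ/2) ^ 2) : ℝ) : ℂ) = H θ := by
    rw [hypF, hHdef]
    apply tsum_congr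
    intro n
    have hz : ((-(Real.sinh (θ/2) ^ 2) : ℝ) : ℂ) = -(Complex.sinh ((θ:ℂ)/2))^2 := by
      push_cast
      ring
    rw [hz, ff]
    have hpow : (-(Complex.sinh ((θ:ℂ)/2))^2)^n
        = (-1)^n * (Complex.sinh ((θ:ℂ)/2))^(2*n) := by
      rw [neg_pow, pow_mul]
    rw [hpow]
    have h1 := hcE lam n
    linear_combination (Complex.sinh ((θ:ℂ)/2))^(2*n) * h1
  rw [hfinal]
  exact hHG.symm
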